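/- The simple graph G on vertex set {1,2,3,4,5,6,7} with edge set {{1,2},{1,3},{2,4},{2,5},{2,7},{3,4},{3,5},{3,7},{4,5},{4,6},{5,6}} (graph number 812 in the Atlas of Graphs) has minimum rank 3 over the real numbers. -/

import Mathlib

/-- Edge list of graph number 812 in the Atlas of Graphs (vertices 1..7). -/
def atlas812Edges : List (ℕ × ℕ) := [(1,2),(1,3),(2,4),(2,5),(2,7),(3,4),(3,5),(3,7),(4,5),(4,6),(5,6)]

def AZ : Matrix (Fin 7) (Fin 7) ℤ :=
  !![0,2,2,0,0,0,0; 2,0,0,2,2,0,2; 2,0,0,2,2,0,2; 0,2,2,1,1,1,0;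
     0,2,2,1,1,1,0; 0,0,0,1,1,1,0; 0,2,2,0,0,0,0]

def BZ : Matrix (Fin 7) (Fin 3) ℤ :=
  !![1,0,0; 0,1,0; 0,1,0; 0,0,1; 0,0,1; -1,0,1; 1,0,0]

def CZ : Matrix (Fin 3) (Fin 7) ℤ :=
  !![0,2,2,0,0,0,0; 2,0,0,2,2,0,2; 0,2,2,1,1,1,0]

lemma hBC : AZ = BZ * CZ := by decide

lemma hAZsymm : AZ.IsSymm := by decide

lemma hAZpat : ∀ i j : Fin 7, i ≠ j →
    (AZ i j ≠ 0 ↔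
      ((i.val + 1, j.val + 1) ∈ atlas812Edges ∨
       (j.val + 1, i.val + 1) ∈ atlas812Edges)) := by
  intro i j; fin_cases i <;> fin_cases j <;> decide

/-- lower bound: any matrix with the right pattern has rank at least 3 -/
lemma lower_bound (A : Matrix (Fin 7) (Fin 7) ℝ)
    (hp : ∀ i j : Fin 7, i ≠ j →
      (A i j ≠ 0 ↔
        ((i.val + 1, j.val + 1) ∈ atlas812Edges ∨
         (j.val + 1, i.val + 1) ∈ atlas812Edges))) : 3 ≤ A.rank := by
  set rowsel : Fin 3 → Fin 7 := ![0, 2, 5] with hrow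
  set colsel : Fin 3 → Fin 7 := ![1, 6, 3] with hcol
  set S : Matrix (Fin 3) (Fin 3) ℝ := A.submatrix rowsel colsel with hS
  -- zero entries
  have h06 : A 0 6 = 0 := by
    by_contra h; exact absurd ((hp 0 6 (by decide)).mp h) (by decide)
  have h03 : A 0 3 = 0 := by
    by_contra h; exact absurd ((hp 0 3 (by decide)).mp h) (by decide)
  have h21 : A 2 1 = 0 := by
    by_contra h; exact absurd ((hp 2 1 (by decide)).mp h) (by decide)
  have h51 : A 5 1 = 0 := by
    by_contra h; exact absurd ((hp 5 1 (by decide)).mp h) (by decide)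
  have h56 : A 5 6 = 0 := by
    by_contra h; exact absurd ((hp 5 6 (by decide)).mp h) (by decide)
  -- nonzero entries
  have h01 : A 0 1 ≠ 0 := by rw [hp 0 1 (by decide)]; decide
  have h26 : A 2 6 ≠ 0 := by rw [hp 2 6 (by decide)]; decide
  have h53 : A 5 3 ≠ 0 := by rw [hp 5 3 (by decide)]; decide
  have hdet : S.det ≠ 0 := by
    rw [Matrix.det_fin_three]
    have e00 : S 0 0 = A 0 1 := rfl
    have e01 : S 0 1 = A 0 6 := rfl
    have e02 : S 0 2 = A 0 3 := rfl
    have e10 : S 1 0 = A 2 1 := rfl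
    have e11 : S 1 1 = A 2 6 := rfl
    have e12 : S 1 2 = A 2 3 := rfl
    have e20 : S 2 0 = A 5 1 := rfl
    have e21 : S 2 1 = A 5 6 := rfl
    have e22 : S 2 2 = A 5 3 := rfl
    rw [e00, e01, e02, e10, e11, e12, e20, e21, e22, h06, h03, h21, h51, h56]
    simp only [mul_zero, zero_mul, sub_zero, add_zero, zero_sub, neg_zero]
    exact mul_ne_zero (mul_ne_zero h01 h26) h53
  have hSrank : S.rank = 3 := by
    rw [Matrix.rank_of_isUnit S ((Matrix.isUnit_iff_isUnit_det S).mpr hdet.isUnit),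
      Fintype.card_fin]
  have hfact : S = (1 : Matrix (Fin 7) (Fin 7) ℝ).submatrix rowsel (Equiv.refl (Fin 7)) *
      (A * (1 : Matrix (Fin 7) (Fin 7) ℝ).submatrix (Equiv.refl (Fin 7)) colsel) := by
    rw [Matrix.mul_submatrix_one, Matrix.one_submatrix_mul]
    simp [hS]
  calc (3 : ℕ) = S.rank := hSrank.symm
    _ ≤ (A * (1 : Matrix (Fin 7) (Fin 7) ℝ).submatrix (Equiv.refl (Fin 7)) colsel).rank := by
        rw [hfact]; exact Matrix.rank_mul_le_right _ _
    _ ≤ A.rank := Matrix.rank_mul_le_left _ _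

/-- Graph number 812 in the Atlas of Graphs has minimum rank 3 over the reals:
3 is the least element of the set of ranks of real symmetric 7×7 matrices whose
off-diagonal zero/nonzero pattern matches the edges of the graph. -/
theorem atlas812_minRank_eq_three :
    IsLeast {r : ℕ | ∃ A : Matrix (Fin 7) (Fin 7) ℝ, A.IsSymm ∧
        (∀ i j : Fin 7, i ≠ j →
          (A i j ≠ 0 ↔
            ((i.val + 1, j.val + 1) ∈ atlas812Edges ∨
             (j.val + 1, i.val + 1) ∈ atlas812Edges))) ∧
        A.rank = r} 3 := by
  constructor
  · refine ⟨AZ.map (Int.castRingHom ℝ), ?_, ?_, ?_⟩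
    · rw [Matrix.IsSymm, ← Matrix.transpose_map, hAZsymm]
    · intro i j hij
      rw [Matrix.map_apply, Int.coe_castRingHom, Int.cast_ne_zero]
      exact hAZpat i j hij
    · refine le_antisymm ?_ ?_
      · have : AZ.map (Int.castRingHom ℝ) =
            BZ.map (Int.castRingHom ℝ) * CZ.map (Int.castRingHom ℝ) := by
          rw [← Matrix.map_mul, ← hBC]
        rw [this]
        exact (Matrix.rank_mul_le_left _ _).trans
          ((Matrix.rank_le_card_width _).trans_eq (Fintype.card_fin 3))
      · exact lower_bound _ (fun i j hij => by
          rw [Matrix.map_apply, Int.coe_castRingHom, Int.cast_ne_zero]; exact hAZpat i j hij)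
  · rintro r ⟨A, -, hp, rfl⟩
    exact lower_bound A hp
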